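/- There exists a unique b₀ > 0 satisfying 2 b₀ Q(b₀) = (1/√(2π)) e^{-b₀²/2}, i.e., 2 b₀ Q(b₀) = -Q'(b₀), where Q is the Gaussian Q-function. Moreover b₀ ∈ (0.6, 0.62). -/

import Mathlib

open MeasureTheory Real

/-- The Gaussian Q-function (standard normal tail probability). -/
noncomputable def gaussQ (x : ℝ) : ℝ :=
  ∫ k in Set.Ioi x, (1 / Real.sqrt (2 * π)) * Real.exp (-k ^ 2 / 2)

section Aux
open Set Filter Topology intervalIntegral

/-- The standard normal density. -/
noncomputable def phiG (k : ℝ) : ℝ := 1 / Real.sqrt (2 * π) * Real.exp (-k ^ 2 / 2)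

lemma gaussQ_phi (x : ℝ) : gaussQ x = ∫ k in Set.Ioi x, phiG k := rfl

lemma sqrt2pi_pos : 0 < Real.sqrt (2 * π) := Real.sqrt_pos.2 (by positivity)

lemma phiG_pos (k : ℝ) : 0 < phiG k := by
  unfold phiG
  have := sqrt2pi_pos
  positivity

lemma continuous_phiG : Continuous phiG := by unfold phiG; fun_prop

lemma integrable_phiG : Integrable phiG := by
  have h := (integrable_exp_neg_mul_sq (by norm_num : (0:ℝ) < 1/2)).const_mul
      (1 / Real.sqrt (2 * π))
  apply h.congr
  apply Filter.Eventually.of_forall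
  intro k
  unfold phiG
  ring_nf

lemma gaussQ_sub {a b : ℝ} (h : a ≤ b) :
    gaussQ a = (∫ t in a..b, phiG t) + gaussQ b := by
  rw [intervalIntegral.integral_of_le h, gaussQ_phi, gaussQ_phi,
    ← setIntegral_union (Ioc_disjoint_Ioi le_rfl) measurableSet_Ioi
      integrable_phiG.integrableOn integrable_phiG.integrableOn,
    Ioc_union_Ioi_eq_Ioi h]

lemma gaussQ_eq (x : ℝ) : gaussQ x = gaussQ 0 - ∫ t in (0:ℝ)..x, phiG t := by
  rcases le_total 0 x with h | h
  · rw [gaussQ_sub h]; ring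
  · rw [gaussQ_sub h, intervalIntegral.integral_symm]; ring

lemma hasDerivAt_gaussQ (x : ℝ) : HasDerivAt gaussQ (-phiG x) x := by
  have h : HasDerivAt (fun u => ∫ t in (0:ℝ)..u, phiG t) (phiG x) x :=
    intervalIntegral.integral_hasDerivAt_right
      integrable_phiG.intervalIntegrable
      (continuous_phiG.stronglyMeasurableAtFilter _ _)
      continuous_phiG.continuousAt
  have h2 := (hasDerivAt_const x (gaussQ 0)).sub h
  simp only [zero_sub] at h2
  exact h2.congr_of_eventuallyEq (Filter.Eventually.of_forall fun y => gaussQ_eq y)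

lemma gaussQ_zero : gaussQ 0 = 1 / 2 := by
  have h : ∫ k in Ioi (0:ℝ), Real.exp (-(1/2) * k ^ 2) = Real.sqrt (π / (1/2)) / 2 :=
    integral_gaussian_Ioi (1/2)
  have h2 : gaussQ 0 = (1 / Real.sqrt (2 * π)) * ∫ k in Ioi (0:ℝ), Real.exp (-(1/2) * k ^ 2) := by
    rw [gaussQ_phi, ← MeasureTheory.integral_const_mul]
    congr 1 with k
    unfold phiG
    ring_nf
  rw [h2, h]
  rw [show π / (1/2) = 2 * π by ring]
  have hs : Real.sqrt (2*π) ≠ 0 := ne_of_gt sqrt2pi_pos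
  field_simp

lemma hasDerivAt_neg_phiG (k : ℝ) : HasDerivAt (fun t => -phiG t) (k * phiG k) k := by
  unfold phiG
  have h1 : HasDerivAt (fun t : ℝ => -t ^ 2 / 2) (-k) k := by
    have := ((hasDerivAt_pow 2 k).neg).div_const 2
    refine this.congr_deriv ?_
    ring
  have h2 := (h1.exp.const_mul (1 / Real.sqrt (2 * π))).neg
  refine h2.congr_deriv ?_
  ring

lemma hasDerivAt_phiG (k : ℝ) : HasDerivAt phiG (-(k * phiG k)) k := by
  have := (hasDerivAt_neg_phiG k).neg
  simpa [Pi.neg_def] using this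

lemma tendsto_phiG : Tendsto phiG atTop (𝓝 0) := by
  have h1 : Tendsto (fun k : ℝ => k ^ 2 / 2) atTop atTop := by
    apply Filter.Tendsto.atTop_div_const (by norm_num)
    exact tendsto_pow_atTop (by norm_num)
  have h2 : Tendsto (fun k : ℝ => Real.exp (-(k ^ 2 / 2))) atTop (𝓝 0) :=
    (Real.tendsto_exp_neg_atTop_nhds_zero).comp h1
  have h3 := h2.const_mul (1 / Real.sqrt (2 * π))
  simp only [mul_zero] at h3
  apply h3.congr
  intro k; unfold phiG; ring_nf

lemma integral_k_phiG {b : ℝ} (hb : 0 ≤ b) :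
    ∫ k in Ioi b, k * phiG k = phiG b := by
  have := integral_Ioi_of_hasDerivAt_of_nonneg
    (g := fun t => -phiG t) (g' := fun k => k * phiG k) (a := b) (l := 0)
    (continuous_phiG.neg.continuousWithinAt)
    (fun x _ => hasDerivAt_neg_phiG x)
    (fun x hx => by
      have := phiG_pos x
      have : (0:ℝ) < x := lt_of_le_of_lt hb hx
      positivity)
    (by simpa using tendsto_phiG.neg)
  simpa using this

lemma integrableOn_k_phiG {b : ℝ} (hb : 0 ≤ b) :
    IntegrableOn (fun k => k * phiG k) (Ioi b) := by
  apply integrableOn_Ioi_deriv_of_nonneg (l := 0)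
    (continuous_phiG.neg.continuousWithinAt)
    (fun x (_ : x ∈ Ioi b) => hasDerivAt_neg_phiG x)
    (fun x hx => by
      have := phiG_pos x
      have : (0:ℝ) < x := lt_of_le_of_lt hb hx
      positivity)
    (by simpa [Pi.neg_def] using tendsto_phiG.neg)

lemma mills_strict {b : ℝ} (hb : 0 < b) : b * gaussQ b < phiG b := by
  rw [← integral_k_phiG hb.le, gaussQ_phi, ← MeasureTheory.integral_const_mul]
  have hint1 : IntegrableOn (fun k => b * phiG k) (Ioi b) :=
    (integrable_phiG.const_mul b).integrableOn
  have hint2 := integrableOn_k_phiG hb.le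
  have key : 0 < ∫ k in Ioi b, (k - b) * phiG k := by
    rw [(setIntegral_pos_iff_support_of_nonneg_ae ?_ ?_)]
    · have : (Function.support fun k => (k - b) * phiG k) ∩ Ioi b = Ioi b := by
        ext k
        simp only [Function.mem_support, mem_inter_iff, mem_Ioi]
        constructor
        · tauto
        · intro hk
          refine ⟨?_, hk⟩
          have := phiG_pos k
          have : 0 < (k - b) * phiG k := by nlinarith
          exact ne_of_gt this
      rw [this]
      simp
    · filter_upwards [ae_restrict_mem measurableSet_Ioi] with k hk
      have := phiG_pos k
      have : (0:ℝ) ≤ k - b := by simp at hk; linarith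
      positivity
    · apply (hint2.sub hint1).congr
      filter_upwards with k
      simp only [Pi.sub_apply]
      ring
  have heq : ∫ k in Ioi b, (k - b) * phiG k
      = (∫ k in Ioi b, k * phiG k) - ∫ k in Ioi b, b * phiG k := by
    rw [← integral_sub hint2 hint1]
    congr 1 with k
    ring
  rw [heq] at key
  linarith

lemma gaussQ_nonneg (b : ℝ) : 0 ≤ gaussQ b := by
  rw [gaussQ_phi]
  exact setIntegral_nonneg measurableSet_Ioi (fun k _ => (phiG_pos k).le)

/-- The auxiliary function `(1+b²)Q(b) - bφ(b)`. -/
noncomputable def wG (b : ℝ) : ℝ := (1 + b ^ 2) * gaussQ b - b * phiG b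

lemma tendsto_mul_phiG : Tendsto (fun b : ℝ => b * phiG b) atTop (𝓝 0) := by
  have h1 : Tendsto (fun b : ℝ => (1 / Real.sqrt (2 * π)) * (b ^ 1 * Real.exp (-b)))
      atTop (𝓝 0) := by
    have := (tendsto_pow_mul_exp_neg_atTop_nhds_zero 1).const_mul (1 / Real.sqrt (2 * π))
    simpa using this
  apply tendsto_of_tendsto_of_tendsto_of_le_of_le' tendsto_const_nhds h1
  · filter_upwards [eventually_ge_atTop (0:ℝ)] with b hb
    have := (phiG_pos b).le
    positivity
  · filter_upwards [eventually_ge_atTop (2:ℝ)] with b hb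
    have hexp : Real.exp (-b ^ 2 / 2) ≤ Real.exp (-b) := by
      apply Real.exp_le_exp.2
      nlinarith
    have hc : (0:ℝ) < 1 / Real.sqrt (2 * π) := by
      have := sqrt2pi_pos
      positivity
    unfold phiG
    rw [pow_one]
    have key := mul_le_mul_of_nonneg_left hexp
      (by positivity : (0:ℝ) ≤ 1 / Real.sqrt (2 * π) * b)
    nlinarith [key]

lemma tendsto_wG : Tendsto wG atTop (𝓝 0) := by
  have hlow : Tendsto (fun b : ℝ => -(b * phiG b)) atTop (𝓝 0) := by
    simpa using tendsto_mul_phiG.neg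
  have hhigh : Tendsto (fun b : ℝ => 2 * (b * phiG b)) atTop (𝓝 0) := by
    simpa using tendsto_mul_phiG.const_mul 2
  apply tendsto_of_tendsto_of_tendsto_of_le_of_le' hlow hhigh
  · filter_upwards [eventually_ge_atTop (1:ℝ)] with b hb
    have h1 := gaussQ_nonneg b
    have h2 := (phiG_pos b).le
    unfold wG
    nlinarith
  · filter_upwards [eventually_ge_atTop (1:ℝ)] with b hb
    have h1 := (mills_strict (by linarith : (0:ℝ) < b)).le
    have h2 := gaussQ_nonneg b
    have h3 := (phiG_pos b).le
    unfold wG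
    nlinarith

lemma hasDerivAt_wG (b : ℝ) : HasDerivAt wG (2 * (b * gaussQ b - phiG b)) b := by
  unfold wG
  have h1 : HasDerivAt (fun t : ℝ => 1 + t ^ 2) (2 * b) b := by
    simpa using (hasDerivAt_pow 2 b).const_add 1
  have h2 := h1.mul (hasDerivAt_gaussQ b)
  have h3 := (hasDerivAt_id b).mul (hasDerivAt_phiG b)
  have h4 := h2.sub h3
  refine h4.congr_deriv ?_
  simp only [id]
  ring

lemma wG_antitoneOn : StrictAntiOn wG (Ioi 0) := by
  apply strictAntiOn_of_deriv_neg (convex_Ioi 0)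
  · exact fun x _ => ((hasDerivAt_wG x).continuousAt).continuousWithinAt
  · intro x hx
    rw [interior_Ioi] at hx
    rw [(hasDerivAt_wG x).deriv]
    have := mills_strict hx
    linarith

lemma wG_pos {b : ℝ} (hb : 0 < b) : 0 < wG b := by
  have h1 : wG (b + 1) < wG b :=
    wG_antitoneOn (Set.mem_Ioi.2 hb) (Set.mem_Ioi.2 (by linarith)) (by linarith)
  have h2 : 0 ≤ wG (b + 1) := by
    apply le_of_tendsto tendsto_wG
    filter_upwards [eventually_ge_atTop (b + 1)] with y hy
    rcases eq_or_lt_of_le hy with h | h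
    · rw [← h]
    · exact (wG_antitoneOn (Set.mem_Ioi.2 (by linarith)) (Set.mem_Ioi.2 (by linarith)) h).le
  linarith

/-- `E(b) = 2bQ(b)e^{b²/2}`; the equation `2bQ(b)=φ(b)` is equivalent to `E(b)=1/√(2π)`. -/
noncomputable def EG (b : ℝ) : ℝ := 2 * b * gaussQ b * Real.exp (b ^ 2 / 2)

lemma hasDerivAt_EG (b : ℝ) : HasDerivAt EG (2 * Real.exp (b ^ 2 / 2) * wG b) b := by
  unfold EG
  have h1 : HasDerivAt (fun t : ℝ => 2 * t) 2 b := by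
    simpa using (hasDerivAt_id b).const_mul 2
  have h2 := h1.mul (hasDerivAt_gaussQ b)
  have h3 : HasDerivAt (fun t : ℝ => t ^ 2 / 2) b b := by
    have := (hasDerivAt_pow 2 b).div_const 2
    refine this.congr_deriv ?_
    ring
  have h4 := h3.exp
  have h5 := h2.mul h4
  refine h5.congr_deriv ?_
  unfold wG
  simp only [Pi.mul_apply]
  ring

lemma EG_strictMonoOn : StrictMonoOn EG (Ici 0) := by
  apply strictMonoOn_of_deriv_pos (convex_Ici 0)
  · exact fun x _ => ((hasDerivAt_EG x).continuousAt).continuousWithinAt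
  · intro x hx
    rw [interior_Ici] at hx
    rw [(hasDerivAt_EG x).deriv]
    have h1 := wG_pos hx
    have h2 := Real.exp_pos (x ^ 2 / 2)
    positivity

lemma phiG_mul_exp (b : ℝ) : phiG b * Real.exp (b ^ 2 / 2) = 1 / Real.sqrt (2 * π) := by
  unfold phiG
  rw [mul_assoc, ← Real.exp_add, show -b ^ 2 / 2 + b ^ 2 / 2 = 0 by ring,
    Real.exp_zero, mul_one]

lemma root_iff (b : ℝ) :
    2 * b * gaussQ b = phiG b ↔ EG b = 1 / Real.sqrt (2 * π) := by
  constructor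
  · intro h
    unfold EG
    rw [h, phiG_mul_exp]
  · intro h
    unfold EG at h
    rw [← phiG_mul_exp b] at h
    exact mul_right_cancel₀ (ne_of_gt (Real.exp_pos _)) h

/-! ### Numerical bounds -/

lemma sqrt2pi_lt : Real.sqrt (2 * π) < 2.5067 :=
  (Real.sqrt_lt' (by norm_num)).2 (by nlinarith [Real.pi_lt_d6])

lemma lt_sqrt2pi : 2.5066 < Real.sqrt (2 * π) :=
  (Real.lt_sqrt (by norm_num)).2 (by nlinarith [Real.pi_gt_d6])

lemma exp_neg_bounds {u : ℝ} (h0 : 0 ≤ u) (h1 : u ≤ 1) :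
    1 - u + u ^ 2 / 2 - 2 / 9 * u ^ 3 ≤ Real.exp (-u) ∧
      Real.exp (-u) ≤ 1 - u + u ^ 2 / 2 + 2 / 9 * u ^ 3 := by
  have h := Real.exp_bound (x := -u) (by rwa [abs_neg, abs_of_nonneg h0]) (n := 3) (by norm_num)
  rw [Finset.sum_range_succ, Finset.sum_range_succ, Finset.sum_range_succ,
    Finset.sum_range_zero, abs_neg, abs_of_nonneg h0] at h
  norm_num [Nat.factorial] at h
  obtain ⟨hl, hr⟩ := abs_le.1 h
  constructor <;> nlinarith

noncomputable def JG (x : ℝ) : ℝ := ∫ k in (0:ℝ)..x, Real.exp (-k ^ 2 / 2)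

lemma poly_integral (x s : ℝ) :
    ∫ k in (0:ℝ)..x, (1 - k ^ 2 / 2 + k ^ 4 / 8 + s * k ^ 6)
      = x - x ^ 3 / 6 + x ^ 5 / 40 + s * x ^ 7 / 7 := by
  have hd : ∀ k ∈ uIcc (0:ℝ) x,
      HasDerivAt (fun t => t - t ^ 3 / 6 + t ^ 5 / 40 + s * t ^ 7 / 7)
        (1 - k ^ 2 / 2 + k ^ 4 / 8 + s * k ^ 6) k := by
    intro k _
    have h := (((hasDerivAt_id k).sub ((hasDerivAt_pow 3 k).div_const 6)).add
      ((hasDerivAt_pow 5 k).div_const 40)).add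
      (((hasDerivAt_pow 7 k).const_mul s).div_const 7)
    refine h.congr_deriv ?_
    push_cast
    ring
  rw [integral_eq_sub_of_hasDerivAt hd ((Continuous.intervalIntegrable (by continuity) _ _))]
  ring

lemma exp_pt_bounds {k : ℝ} (h1 : k ^ 2 / 2 ≤ 1) (h0 : 0 ≤ k ^ 2 / 2) :
    1 - k ^ 2 / 2 + k ^ 4 / 8 + (-1/36) * k ^ 6 ≤ Real.exp (-k ^ 2 / 2) ∧
      Real.exp (-k ^ 2 / 2) ≤ 1 - k ^ 2 / 2 + k ^ 4 / 8 + (1/36) * k ^ 6 := by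
  obtain ⟨hl, hr⟩ := exp_neg_bounds h0 h1
  rw [show -(k ^ 2 / 2) = -k ^ 2 / 2 by ring] at hl hr
  constructor <;> nlinarith

lemma JG_lb {x : ℝ} (h0 : 0 ≤ x) (h1 : x ≤ 0.62) :
    x - x ^ 3 / 6 + x ^ 5 / 40 + (-1/36) * x ^ 7 / 7 ≤ JG x := by
  rw [← poly_integral x (-1/36)]
  apply integral_mono_on h0 (Continuous.intervalIntegrable (by continuity) _ _)
    (Continuous.intervalIntegrable (by continuity) _ _)
  intro k hk
  obtain ⟨hk0, hk1⟩ := hk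
  exact (exp_pt_bounds (by nlinarith) (by positivity)).1

lemma JG_ub {x : ℝ} (h0 : 0 ≤ x) (h1 : x ≤ 0.62) :
    JG x ≤ x - x ^ 3 / 6 + x ^ 5 / 40 + (1/36) * x ^ 7 / 7 := by
  rw [← poly_integral x (1/36)]
  apply integral_mono_on h0 (Continuous.intervalIntegrable (by continuity) _ _)
    (Continuous.intervalIntegrable (by continuity) _ _)
  intro k hk
  obtain ⟨hk0, hk1⟩ := hk
  exact (exp_pt_bounds (by nlinarith) (by positivity)).2

lemma gaussQ_val (x : ℝ) : gaussQ x = 1 / 2 - 1 / Real.sqrt (2 * π) * JG x := by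
  rw [gaussQ_eq, gaussQ_zero, JG, ← intervalIntegral.integral_const_mul]
  rfl

lemma endpoint1 : 2 * 0.6 * gaussQ 0.6 < phiG 0.6 := by
  have hJ := JG_lb (by norm_num : (0:ℝ) ≤ 0.6) (by norm_num)
  have hE := (exp_neg_bounds (u := 0.18) (by norm_num) (by norm_num)).1
  have hc : (1:ℝ)/2.5067 < 1 / Real.sqrt (2 * π) :=
    one_div_lt_one_div_of_lt sqrt2pi_pos sqrt2pi_lt
  have hcpos : (0:ℝ) < 1 / Real.sqrt (2 * π) := by
    have := sqrt2pi_pos; positivity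
  rw [gaussQ_val]
  unfold phiG
  rw [show -(0.6:ℝ) ^ 2 / 2 = -0.18 by norm_num]
  set c := 1 / Real.sqrt (2 * π)
  set J := JG 0.6
  set A : ℝ := 0.6 - 0.6 ^ 3 / 6 + 0.6 ^ 5 / 40 + (-1/36) * 0.6 ^ 7 / 7 with hA
  set B : ℝ := 1 - 0.18 + 0.18 ^ 2 / 2 - 2 / 9 * 0.18 ^ 3 with hB
  clear_value c J A B
  have h1 : (0.6:ℝ) < (1/2.5067) * (1.2 * A + B) := by rw [hA, hB]; norm_num
  have hsum : (0:ℝ) < 1.2 * A + B := by rw [hA, hB]; norm_num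
  have h2 : c * (1.2 * A + B) ≤ c * (1.2 * J + Real.exp (-0.18)) := by
    apply mul_le_mul_of_nonneg_left (by linarith) hcpos.le
  have h3 : (1/2.5067) * (1.2 * A + B) < c * (1.2 * A + B) :=
    mul_lt_mul_of_pos_right hc hsum
  nlinarith [h1, h2, h3]

lemma endpoint2 : phiG 0.62 < 2 * 0.62 * gaussQ 0.62 := by
  have hJ := JG_ub (by norm_num : (0:ℝ) ≤ 0.62) (by norm_num)
  have hE := (exp_neg_bounds (u := 0.1922) (by norm_num) (by norm_num)).2
  have hc : (1:ℝ) / Real.sqrt (2 * π) < 1/2.5066 :=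
    one_div_lt_one_div_of_lt (by norm_num) lt_sqrt2pi
  have hJ0 := JG_lb (by norm_num : (0:ℝ) ≤ 0.62) (by norm_num)
  have hJ0' : (0:ℝ) < 0.62 - 0.62 ^ 3 / 6 + 0.62 ^ 5 / 40 + (-1/36) * 0.62 ^ 7 / 7 := by
    norm_num
  have hexp := Real.exp_pos (-0.1922 : ℝ)
  have hcpos : (0:ℝ) < 1 / Real.sqrt (2 * π) := by
    have := sqrt2pi_pos; positivity
  rw [gaussQ_val]
  unfold phiG
  rw [show -(0.62:ℝ) ^ 2 / 2 = -0.1922 by norm_num]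
  set c := 1 / Real.sqrt (2 * π)
  set J := JG 0.62
  set A : ℝ := 0.62 - 0.62 ^ 3 / 6 + 0.62 ^ 5 / 40 + (1/36) * 0.62 ^ 7 / 7 with hA
  set B : ℝ := 1 - 0.1922 + 0.1922 ^ 2 / 2 + 2 / 9 * 0.1922 ^ 3 with hB
  clear_value c J A B
  have h1 : (1/2.5066) * (1.24 * A + B) < 0.62 := by rw [hA, hB]; norm_num
  have hsum : (0:ℝ) < 1.24 * J + Real.exp (-0.1922) := by linarith
  have h2 : c * (1.24 * J + Real.exp (-0.1922)) ≤ c * (1.24 * A + B) := by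
    apply mul_le_mul_of_nonneg_left (by linarith) hcpos.le
  have h3 : c * (1.24 * A + B) < (1/2.5066) * (1.24 * A + B) := by
    apply mul_lt_mul_of_pos_right hc
    nlinarith
  nlinarith [h1, h2, h3]

lemma EG_lt_at_06 : EG 0.6 < 1 / Real.sqrt (2 * π) := by
  have h := mul_lt_mul_of_pos_right endpoint1 (Real.exp_pos ((0.6:ℝ) ^ 2 / 2))
  rw [phiG_mul_exp] at h
  exact h

lemma EG_gt_at_062 : 1 / Real.sqrt (2 * π) < EG 0.62 := by
  have h := mul_lt_mul_of_pos_right endpoint2 (Real.exp_pos ((0.62:ℝ) ^ 2 / 2))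
  rw [phiG_mul_exp] at h
  exact h

end Aux

theorem stmt_9 :
    (∃! b₀ : ℝ, 0 < b₀ ∧
        2 * b₀ * gaussQ b₀ = 1 / Real.sqrt (2 * π) * Real.exp (-b₀ ^ 2 / 2)) ∧
    (∀ b₀ : ℝ, 0 < b₀ →
        2 * b₀ * gaussQ b₀ = 1 / Real.sqrt (2 * π) * Real.exp (-b₀ ^ 2 / 2) →
        b₀ ∈ Set.Ioo (0.6 : ℝ) 0.62) := by
  have hbound : ∀ b₀ : ℝ, 0 < b₀ →
      2 * b₀ * gaussQ b₀ = 1 / Real.sqrt (2 * π) * Real.exp (-b₀ ^ 2 / 2) →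
      b₀ ∈ Set.Ioo (0.6 : ℝ) 0.62 := by
    intro b hb heq
    have hroot : EG b = 1 / Real.sqrt (2 * π) := (root_iff b).1 heq
    constructor
    · by_contra h
      push_neg at h
      have h1 : EG b ≤ EG 0.6 := by
        rcases eq_or_lt_of_le h with h' | h'
        · rw [h']
        · exact (EG_strictMonoOn (Set.mem_Ici.2 hb.le) (Set.mem_Ici.2 (by norm_num)) h').le
      have := EG_lt_at_06
      rw [hroot] at h1
      linarith
    · by_contra h
      push_neg at h
      have h1 : EG 0.62 ≤ EG b := by
        rcases eq_or_lt_of_le h with h' | h'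
        · rw [h']
        · exact (EG_strictMonoOn (Set.mem_Ici.2 (by norm_num)) (Set.mem_Ici.2 hb.le) h').le
      have := EG_gt_at_062
      rw [hroot] at h1
      linarith
  refine ⟨?_, hbound⟩
  have hcont : ContinuousOn EG (Set.Icc 0.6 0.62) :=
    fun x _ => ((hasDerivAt_EG x).continuousAt).continuousWithinAt
  have hiv := intermediate_value_Ioo (by norm_num : (0.6:ℝ) ≤ 0.62) hcont
  have hmem : 1 / Real.sqrt (2 * π) ∈ Set.Ioo (EG 0.6) (EG 0.62) :=
    ⟨EG_lt_at_06, EG_gt_at_062⟩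
  obtain ⟨b₀, hb₀mem, hb₀⟩ := hiv hmem
  refine ⟨b₀, ⟨by linarith [hb₀mem.1], (root_iff b₀).2 hb₀⟩, ?_⟩
  rintro y ⟨hy, hyeq⟩
  have h1 : EG y = 1 / Real.sqrt (2 * π) := (root_iff y).1 hyeq
  have h2 : EG y = EG b₀ := by rw [h1, hb₀]
  exact EG_strictMonoOn.injOn (Set.mem_Ici.2 hy.le)
    (Set.mem_Ici.2 (by linarith [hb₀mem.1])) h2
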